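/- (Single-tree integral bound) Let (Y, 𝒜, μ) be a measure space, g : Y × Y → ℝ≥0 a measurable symmetric function, and C ≥ 0 such that ∫_Y g(y, u) dμ(u) ≤ C for every y ∈ Y. Then for every n ≥ 1, every tree T on the vertex set {1, …, n+1}, and every x ∈ Y: ∫_{Y^n} ∏_{{i,j} ∈ T} g(ŷ_i, ŷ_j) dμ^{⊗n}(y₁, …, y_n) ≤ C^{n−1} · ∫_Y g(x, u) dμ(u), where ŷ_i := y_i for 1 ≤ i ≤ n and ŷ_{n+1} := x. -/

import Mathlib

open MeasureTheory ENNReal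

noncomputable section

/-- Weight of an unordered pair of vertices: `{i,j} ↦ g(f(i), f(j))` for a symmetric `g`. -/
def sym2Weight {V Y : Type*} (g : Y → Y → NNReal) (hg : ∀ a b, g a b = g b a)
    (f : V → Y) : Sym2 V → NNReal :=
  Sym2.lift ⟨fun i j => g (f i) (f j), fun i j => hg (f i) (f j)⟩

section TreeBoundAux

open Finset

set_option maxHeartbeats 800000

set_option linter.unusedSectionVars false
set_option maxHeartbeats 800000



variable {V : Type*} [DecidableEq V]

/-- Connectivity relation induced by an edge finset. -/
def edgeRTG (T : Finset (Sym2 V)) : V → V → Prop :=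
  Relation.ReflTransGen (fun u z => s(u, z) ∈ T)

lemma rtg_avoid {T : Finset (Sym2 V)} {v w : V} (hvw : v ≠ w)
    (honly : ∀ e ∈ T, v ∈ e → e = s(v, w)) :
    ∀ {a b : V}, edgeRTG T a b → a ≠ v →
      (b = v → edgeRTG (T.erase s(v, w)) a w) ∧ (b ≠ v → edgeRTG (T.erase s(v, w)) a b) := by
  intro a b h ha
  induction h with
  | refl => exact ⟨fun hb => absurd hb ha, fun _ => Relation.ReflTransGen.refl⟩
  | @tail c b h step ih =>
    constructor
    · rintro rfl
      have hc : c = w := by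
        have := honly _ step (by simp)
        rw [Sym2.eq_iff] at this
        rcases this with ⟨h1, h2⟩ | ⟨h1, h2⟩
        · exact absurd h2 hvw
        · exact h1
      subst hc
      exact ih.2 (Ne.symm hvw)
    · intro hb
      by_cases hc : c = v
      · subst hc
        have : b = w := by
          have := honly _ step (by simp)
          rw [Sym2.eq_iff] at this
          rcases this with ⟨h1, h2⟩ | ⟨h1, h2⟩
          · exact h2
          · exact absurd h1 hvw
        subst this
        exact ih.1 rfl
      · refine (ih.2 hc).tail ?_
        refine Finset.mem_erase.mpr ⟨?_, step⟩
        intro hEq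
        have : v ∈ s(c, b) := hEq ▸ (by simp : v ∈ s(v, w))
        rw [Sym2.mem_iff] at this
        rcases this with rfl | rfl
        · exact hc rfl
        · exact hb rfl

lemma exists_step {T : Finset (Sym2 V)} {a b : V} (h : edgeRTG T a b) (hab : a ≠ b) :
    ∃ c, s(a, c) ∈ T := by
  rcases Relation.ReflTransGen.cases_head h with rfl | ⟨c, hc, _⟩
  · exact absurd rfl hab
  · exact ⟨c, hc⟩

lemma degree_sum (A : Finset V) (T : Finset (Sym2 V))
    (hdiag : ∀ e ∈ T, ¬ e.IsDiag) (hmemA : ∀ e ∈ T, ∀ u ∈ e, u ∈ A) :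
    ∑ v ∈ A, (T.filter (fun e => v ∈ e)).card = 2 * T.card := by
  have key : ∀ e ∈ T, (A.filter (fun v => v ∈ e)).card = 2 := by
    intro e he
    induction e with
    | _ a b =>
      have hab : a ≠ b := by simpa [Sym2.mk_isDiag_iff] using hdiag _ he
      have : A.filter (fun v => v ∈ s(a, b)) = {a, b} := by
        ext u
        simp only [Finset.mem_filter, Sym2.mem_iff, Finset.mem_insert, Finset.mem_singleton]
        constructor
        · tauto
        · rintro (rfl | rfl)
          · exact ⟨hmemA _ he _ (by simp), Or.inl rfl⟩
          · exact ⟨hmemA _ he _ (by simp), Or.inr rfl⟩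
      rw [this, Finset.card_insert_of_notMem (by simpa using hab), Finset.card_singleton]
  calc ∑ v ∈ A, (T.filter (fun e => v ∈ e)).card
      = ∑ v ∈ A, ∑ e ∈ T, (if v ∈ e then 1 else 0) := by
        simp_rw [Finset.card_filter]
    _ = ∑ e ∈ T, ∑ v ∈ A, (if v ∈ e then 1 else 0) := Finset.sum_comm
    _ = ∑ e ∈ T, 2 := by
        refine Finset.sum_congr rfl fun e he => ?_
        rw [← Finset.card_filter]
        exact key e he
    _ = 2 * T.card := by rw [Finset.sum_const, smul_eq_mul, mul_comm]

lemma exists_leaf (A : Finset V) (T : Finset (Sym2 V)) (r : V) (hr : r ∈ A)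
    (h2 : 2 ≤ A.card) (hdiag : ∀ e ∈ T, ¬ e.IsDiag)
    (hmemA : ∀ e ∈ T, ∀ u ∈ e, u ∈ A) (hcard : T.card + 1 = A.card)
    (hconn : ∀ a ∈ A, ∀ b ∈ A, edgeRTG T a b) :
    ∃ v ∈ A, v ≠ r ∧ ∃ w, s(v, w) ∈ T ∧ (∀ e ∈ T, v ∈ e → e = s(v, w)) := by
  have deg_pos : ∀ v ∈ A, 1 ≤ (T.filter (fun e => v ∈ e)).card := by
    intro v hv
    obtain ⟨b, hb, hbv⟩ := Finset.exists_mem_ne (show 1 < A.card by omega) v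
    obtain ⟨c, hc⟩ := exists_step (hconn v hv b hb) (Ne.symm hbv)
    exact Finset.card_pos.mpr ⟨s(v, c), Finset.mem_filter.mpr ⟨hc, by simp⟩⟩
  have hsum := degree_sum A T hdiag hmemA
  have hex : ∃ v ∈ A.erase r, (T.filter (fun e => v ∈ e)).card ≤ 1 := by
    by_contra hcon
    push_neg at hcon
    have h1 : 2 * (A.erase r).card ≤ ∑ v ∈ A.erase r, (T.filter (fun e => v ∈ e)).card := by
      calc 2 * (A.erase r).card = ∑ _v ∈ A.erase r, 2 := by
            rw [Finset.sum_const, smul_eq_mul, mul_comm]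
        _ ≤ _ := Finset.sum_le_sum (fun v hv => hcon v hv)
    have h3 : ∑ v ∈ A, (T.filter (fun e => v ∈ e)).card
        = (T.filter (fun e => r ∈ e)).card + ∑ v ∈ A.erase r, (T.filter (fun e => v ∈ e)).card :=
      (Finset.add_sum_erase _ _ hr).symm
    have h4 := deg_pos r hr
    have h5 : (A.erase r).card = A.card - 1 := Finset.card_erase_of_mem hr
    omega
  obtain ⟨v, hv, hdeg⟩ := hex
  have hvA : v ∈ A := Finset.mem_of_mem_erase hv
  have hne : (T.filter (fun e => v ∈ e)).Nonempty := by
    have h1 := deg_pos v hvA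
    exact Finset.card_pos.mp (by omega)
  obtain ⟨ew, hw⟩ := hne
  obtain ⟨c, hc⟩ := Sym2.mem_iff_exists.mp (Finset.mem_filter.mp hw).2
  refine ⟨v, hvA, (Finset.mem_erase.mp hv).1, c, ?_, ?_⟩
  · have := (Finset.mem_filter.mp hw).1; rwa [hc] at this
  · intro e he hve
    have h1 : e ∈ T.filter (fun e => v ∈ e) := Finset.mem_filter.mpr ⟨he, hve⟩
    have := Finset.card_le_one.mp hdeg _ h1 _ hw
    rw [this, ← hc]


variable {V : Type*} [DecidableEq V] {Y : Type*} [MeasurableSpace Y]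
  {μ : Measure Y} [SigmaFinite μ] {g : Y → Y → NNReal}

@[simp] lemma sym2Weight_mk (hsym : ∀ a b, g a b = g b a) (f : V → Y) (i j : V) :
    sym2Weight g hsym f s(i, j) = g (f i) (f j) := rfl

lemma weight_meas (hmeas : Measurable (Function.uncurry g)) (hsym : ∀ a b, g a b = g b a) (e : Sym2 V) :
    Measurable (fun f : V → Y => (sym2Weight g hsym f e : ℝ≥0∞)) := by
  induction e with
  | _ i j =>
    simp only [sym2Weight_mk]
    have : Measurable fun f : V → Y => g (f i) (f j) := by
      have h2 : Measurable fun f : V → Y => (f i, f j) :=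
        (measurable_pi_apply i).prodMk (measurable_pi_apply j)
      exact fun s hs => h2 (hmeas hs)
    exact measurable_coe_nnreal_ennreal.comp this

lemma prodF_meas (hmeas : Measurable (Function.uncurry g)) (hsym : ∀ a b, g a b = g b a) (T : Finset (Sym2 V)) :
    Measurable (fun f : V → Y => ∏ e ∈ T, (sym2Weight g hsym f e : ℝ≥0∞)) :=
  Finset.measurable_prod _ fun e _ => weight_meas hmeas hsym e

lemma sym2Weight_update (hsym : ∀ a b, g a b = g b a) (f : V → Y) (v : V) (y : Y) {e : Sym2 V} (hv : v ∉ e) :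
    sym2Weight g hsym (Function.update f v y) e = sym2Weight g hsym f e := by
  induction e with
  | _ i j =>
    rw [Sym2.mem_iff] at hv
    push_neg at hv
    simp [Function.update_of_ne (Ne.symm hv.1), Function.update_of_ne (Ne.symm hv.2)]

lemma g_meas_left {Y : Type*} [MeasurableSpace Y] {g : Y → Y → NNReal}
    (hmeas : Measurable (Function.uncurry g)) (c : Y) :
    Measurable fun y : Y => (g y c : ℝ≥0∞) := by
  have h2 : Measurable fun y : Y => (y, c) := measurable_id.prodMk measurable_const
  have h3 : Measurable fun y : Y => g y c := fun s hs => h2 (hmeas hs)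
  exact measurable_coe_nnreal_ennreal.comp h3

lemma tree_marginal_bound {V : Type*} [DecidableEq V] {Y : Type*} [MeasurableSpace Y]
    (μ : Measure Y) [SigmaFinite μ] (g : Y → Y → NNReal)
    (hmeas : Measurable (Function.uncurry g)) (hsym : ∀ a b, g a b = g b a)
    (C : NNReal) (hC : ∀ y : Y, ∫⁻ u, (g y u : ℝ≥0∞) ∂μ ≤ C) :
    ∀ (k : ℕ), 1 ≤ k → ∀ (A : Finset V) (T : Finset (Sym2 V)) (r : V), r ∈ A →
    A.card = k + 1 → (∀ e ∈ T, ¬ e.IsDiag) → (∀ e ∈ T, ∀ u ∈ e, u ∈ A) →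
    T.card + 1 = A.card → (∀ a ∈ A, ∀ b ∈ A, edgeRTG T a b) → ∀ z : V → Y,
    (∫⋯∫⁻_(A.erase r), (fun f => ∏ e ∈ T, (sym2Weight g hsym f e : ℝ≥0∞)) ∂(fun _ => μ)) z
      ≤ (C : ℝ≥0∞) ^ (k - 1) * ∫⁻ u, (g (z r) u : ℝ≥0∞) ∂μ := by
  intro k hk
  induction k, hk using Nat.le_induction with
  | base =>
    intro A T r hr hA hdiag hmemA hcardT hconn z
    have hT1 : T.card = 1 := by omega
    obtain ⟨e₀, hT⟩ := Finset.card_eq_one.mp hT1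
    subst hT
    induction e₀ with
    | _ a b =>
      have hab : a ≠ b := by
        simpa [Sym2.mk_isDiag_iff] using hdiag s(a, b) (Finset.mem_singleton_self _)
      have haA : a ∈ A := hmemA _ (Finset.mem_singleton_self _) a (by simp)
      have hbA : b ∈ A := hmemA _ (Finset.mem_singleton_self _) b (by simp)
      have hAab : A = {a, b} := by
        refine (Finset.eq_of_subset_of_card_le ?_ ?_).symm
        · intro u hu
          simp only [Finset.mem_insert, Finset.mem_singleton] at hu
          rcases hu with rfl | rfl <;> assumption
        · rw [hA, Finset.card_insert_of_notMem (by simpa using hab), Finset.card_singleton]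
      have hr' : r = a ∨ r = b := by
        have := hAab ▸ hr
        simpa using this
      rcases hr' with rfl | rfl
      · have herase : A.erase r = {b} := by
          rw [hAab, Finset.erase_insert (by simpa using hab)]
        rw [herase, lmarginal_singleton]
        simp only [Finset.prod_singleton, sym2Weight_mk,
          Function.update_self, Function.update_of_ne hab, Nat.sub_self, pow_zero, one_mul]
        exact le_refl _
      · have herase : A.erase r = {a} := by
          rw [hAab, Finset.pair_comm, Finset.erase_insert (by simpa using hab.symm)]
        rw [herase, lmarginal_singleton]
        simp only [Finset.prod_singleton, sym2Weight_mk,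
          Function.update_self, Function.update_of_ne hab.symm, Nat.sub_self, pow_zero, one_mul]
        refine le_of_eq (lintegral_congr fun xᵢ => ?_)
        rw [hsym]
  | succ k hk ih =>
    intro A T r hr hA hdiag hmemA hcardT hconn z
    obtain ⟨v, hvA, hvr, w, hvwT, honly⟩ :=
      exists_leaf A T r hr (by omega) hdiag hmemA hcardT hconn
    have hvw : v ≠ w := by simpa [Sym2.mk_isDiag_iff] using hdiag _ hvwT
    have hwA : w ∈ A := hmemA _ hvwT w (by simp)
    set T' := T.erase s(v, w) with hT'
    set t := (A.erase v).erase r with ht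
    have hvt : v ∉ t := by
      intro h
      exact Finset.notMem_erase v A (Finset.mem_of_mem_erase (ht ▸ h))
    have hsplit : A.erase r = insert v t := by
      ext u
      simp only [ht, Finset.mem_erase, Finset.mem_insert]
      constructor
      · rintro ⟨hur, huA⟩
        by_cases h : u = v
        · exact Or.inl h
        · exact Or.inr ⟨hur, h, huA⟩
      · rintro (rfl | ⟨h1, h2, h3⟩)
        · exact ⟨hvr, hvA⟩
        · exact ⟨h1, h3⟩
    have hFmeas := prodF_meas (V := V) hmeas hsym T
    rw [hsplit, lmarginal_insert' _ hFmeas hvt]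
    have hinner : ∀ x : V → Y,
        (∫⁻ xᵥ, (∏ e ∈ T, (sym2Weight g hsym (Function.update x v xᵥ) e : ℝ≥0∞)) ∂μ)
          ≤ (∏ e ∈ T', (sym2Weight g hsym x e : ℝ≥0∞)) * C := by
      intro x
      have hT'const : ∀ xᵥ : Y,
          (∏ e ∈ T', (sym2Weight g hsym (Function.update x v xᵥ) e : ℝ≥0∞))
            = ∏ e ∈ T', (sym2Weight g hsym x e : ℝ≥0∞) := by
        intro xᵥ
        refine Finset.prod_congr rfl fun e he => ?_
        have hve : v ∉ e := by
          intro hv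
          exact (Finset.mem_erase.mp he).1 (honly e (Finset.mem_of_mem_erase he) hv)
        rw [sym2Weight_update hsym _ _ _ hve]
      have step1 : (∫⁻ xᵥ, (∏ e ∈ T, (sym2Weight g hsym (Function.update x v xᵥ) e : ℝ≥0∞)) ∂μ)
          = (∫⁻ xᵥ, (g xᵥ (x w) : ℝ≥0∞) ∂μ) * ∏ e ∈ T', (sym2Weight g hsym x e : ℝ≥0∞) := by
        rw [← lintegral_mul_const'']
        · refine lintegral_congr fun xᵥ => ?_
          rw [← Finset.mul_prod_erase T _ hvwT, sym2Weight_mk, hT'const,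
            Function.update_self, Function.update_of_ne (Ne.symm hvw)]
        · exact (g_meas_left hmeas (x w)).aemeasurable
      rw [step1, mul_comm]
      gcongr
      calc ∫⁻ xᵥ, (g xᵥ (x w) : ℝ≥0∞) ∂μ = ∫⁻ xᵥ, (g (x w) xᵥ : ℝ≥0∞) ∂μ := by
            simp_rw [hsym]
        _ ≤ C := hC (x w)
    calc (∫⋯∫⁻_t, (fun x => ∫⁻ xᵥ,
            (∏ e ∈ T, (sym2Weight g hsym (Function.update x v xᵥ) e : ℝ≥0∞)) ∂μ) ∂fun _ => μ) z
        ≤ (∫⋯∫⁻_t, (fun x => (∏ e ∈ T', (sym2Weight g hsym x e : ℝ≥0∞)) * C) ∂fun _ => μ) z :=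
          lmarginal_mono (fun x => hinner x) z
      _ = (∫⋯∫⁻_t, (fun x => ∏ e ∈ T', (sym2Weight g hsym x e : ℝ≥0∞)) ∂fun _ => μ) z * C := by
          simp only [lmarginal]
          rw [lintegral_mul_const' _ _ coe_ne_top]
      _ ≤ ((C : ℝ≥0∞) ^ (k - 1) * ∫⁻ u, (g (z r) u : ℝ≥0∞) ∂μ) * C := by
          gcongr
          refine ih (A.erase v) T' r (Finset.mem_erase.mpr ⟨Ne.symm hvr, hr⟩) ?_
            (fun e he => hdiag e (Finset.mem_of_mem_erase he)) ?_ ?_ ?_ z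
          · rw [Finset.card_erase_of_mem hvA]; omega
          · intro e he u hu
            have huA : u ∈ A := hmemA e (Finset.mem_of_mem_erase he) u hu
            refine Finset.mem_erase.mpr ⟨?_, huA⟩
            rintro rfl
            exact (Finset.mem_erase.mp he).1 (honly e (Finset.mem_of_mem_erase he) hu)
          · have h1 : T'.card = T.card - 1 := Finset.card_erase_of_mem hvwT
            have h2 : (A.erase v).card = A.card - 1 := Finset.card_erase_of_mem hvA
            have h3 : 1 ≤ T.card := Finset.card_pos.mpr ⟨_, hvwT⟩
            omega
          · intro a ha b hb
            exact (rtg_avoid hvw honly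
              (hconn a (Finset.mem_of_mem_erase ha) b (Finset.mem_of_mem_erase hb))
              (Finset.mem_erase.mp ha).1).2 (Finset.mem_erase.mp hb).1
      _ = (C : ℝ≥0∞) ^ (k + 1 - 1) * ∫⁻ u, (g (z r) u : ℝ≥0∞) ∂μ := by
          rw [mul_right_comm, ← pow_succ]
          congr 2
          omega

end TreeBoundAux

/-- Single-tree integral bound: if `g : Y × Y → ℝ≥0` is measurable and symmetric with
`∫_Y g(y, u) dμ(u) ≤ C` for every `y`, then for every `n ≥ 1`, every tree `T` on the vertex set
`{1, …, n+1}` and every `x ∈ Y`,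
`∫_{Y^n} ∏_{{i,j} ∈ T} g(ŷ_i, ŷ_j) dμ^{⊗n} ≤ C^{n−1} · ∫_Y g(x, u) dμ(u)`,
where `ŷ_i := y_i` for `i ≤ n` and `ŷ_{n+1} := x`. -/
theorem tree_integral_bound {Y : Type*} [MeasurableSpace Y] (μ : Measure Y) [SigmaFinite μ]
    (g : Y → Y → NNReal) (hmeas : Measurable (Function.uncurry g))
    (hsym : ∀ a b, g a b = g b a) (C : NNReal)
    (hC : ∀ y : Y, ∫⁻ u, (g y u : ℝ≥0∞) ∂μ ≤ C)
    (n : ℕ) (hn : 1 ≤ n) (T : Finset (Sym2 (Fin (n + 1))))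
    (hdiag : ∀ e ∈ T, ¬ e.IsDiag)
    (htree : (SimpleGraph.fromEdgeSet (↑T : Set (Sym2 (Fin (n + 1))))).IsTree)
    (x : Y) :
    ∫⁻ y : Fin n → Y,
        (∏ e ∈ T, (sym2Weight g hsym (Fin.snoc y x) e : ℝ≥0∞))
        ∂(Measure.pi fun _ : Fin n => μ)
      ≤ (C : ℝ≥0∞) ^ (n - 1) * ∫⁻ u, (g x u : ℝ≥0∞) ∂μ := by
  classical
  have hedge : (SimpleGraph.fromEdgeSet (↑T : Set (Sym2 (Fin (n + 1))))).edgeSet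
      = (↑T : Set (Sym2 (Fin (n + 1)))) := by
    rw [SimpleGraph.edgeSet_fromEdgeSet]
    ext e
    simp only [Set.mem_diff, Finset.mem_coe, Set.mem_setOf_eq, and_iff_left_iff_imp]
    exact fun he => hdiag e he
  have hedgeFinset : (SimpleGraph.fromEdgeSet (↑T : Set (Sym2 (Fin (n + 1))))).edgeFinset = T := by
    ext e
    rw [SimpleGraph.mem_edgeFinset, hedge]
    exact Finset.mem_coe
  have hcardT : T.card + 1 = n + 1 := by
    have := htree.card_edgeFinset
    rwa [hedgeFinset, Fintype.card_fin] at this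
  have hconn : ∀ a ∈ (Finset.univ : Finset (Fin (n + 1))),
      ∀ b ∈ (Finset.univ : Finset (Fin (n + 1))), edgeRTG T a b := by
    intro a _ b _
    have h1 := (SimpleGraph.reachable_iff_reflTransGen a b).mp
      (htree.isConnected.preconnected a b)
    exact Relation.ReflTransGen.mono
      (fun u v h => Finset.mem_coe.mp ((SimpleGraph.fromEdgeSet_adj _).mp h).1) a b h1
  have hmain := tree_marginal_bound μ g hmeas hsym C hC n hn
    (Finset.univ : Finset (Fin (n + 1))) T
    (Fin.last n) (Finset.mem_univ _) (by simp) hdiag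
    (fun e _ u _ => Finset.mem_univ u) (by simpa using hcardT)
    hconn (fun _ => x)
  refine le_trans (le_of_eq ?_) hmain
  set s0 : Finset (Fin (n + 1)) := Finset.univ.erase (Fin.last n) with hs0
  have hmemS : ∀ i : Fin n, i.castSucc ∈ s0 := by
    intro i
    simp only [hs0, Finset.mem_erase, Finset.mem_univ, and_true]
    exact (Fin.castSucc_lt_last i).ne
  let e : Fin n ≃ {j // j ∈ s0} :=
    { toFun := fun i => ⟨i.castSucc, hmemS i⟩
      invFun := fun j => (j : Fin (n + 1)).castPred (by
        have := (Finset.mem_erase.mp j.2).1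
        exact this)
      left_inv := fun i => by simp
      right_inv := fun j => by
        apply Subtype.ext
        simp }
  have hmp := measurePreserving_piCongrLeft (fun _ : {j // j ∈ s0} => μ) e
  rw [lmarginal]
  rw [MeasurePreserving.lintegral_map_equiv _ _ hmp]
  refine lintegral_congr fun a => ?_
  have hfun : Function.updateFinset (fun _ : Fin (n + 1) => x) s0
      ((MeasurableEquiv.piCongrLeft (fun _ : {j // j ∈ s0} => Y) e) a) = Fin.snoc a x := by
    funext i
    refine Fin.lastCases ?_ ?_ i
    · have hlast : Fin.last n ∉ s0 := Finset.notMem_erase _ _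
      simp only [Function.updateFinset]
      rw [dif_neg hlast, Fin.snoc_last]
    · intro j
      have hmem : (j.castSucc : Fin (n + 1)) ∈ s0 := hmemS j
      simp only [Function.updateFinset]
      rw [dif_pos hmem, Fin.snoc_castSucc]
      have heq : (⟨j.castSucc, hmem⟩ : {j // j ∈ s0}) = e j := rfl
      rw [heq, MeasurableEquiv.coe_piCongrLeft, Equiv.piCongrLeft_apply_apply]
  simp only [hfun]


end
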